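/- Let T be an abstract simplicial complex of subsets of U_n := {0,...,n-1} and let Φ ∈ ℝ^{m×n}. Then every vector x̄ ∈ ℝⁿ with supp(x̄) ∈ T is the unique solution of the problem min ‖x‖₁ subject to Φx = Φx̄ if and only if Φ satisfies the Generalized Nullspace Property with respect to T. -/
import Mathlib


/-- The ℓ₁ norm of a vector in ℝⁿ. -/
noncomputable def l1 {n : ℕ} (x : Fin n → ℝ) : ℝ := ∑ i, |x i|

/-- The ℓ₁ norm of the restriction of a vector to an index set `S`. -/
noncomputable def l1S {n : ℕ} (S : Finset (Fin n)) (x : Fin n → ℝ) : ℝ := ∑ i ∈ S, |x i|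

/-- The support of a vector, as a finite index set. -/
noncomputable def suppF {n : ℕ} (x : Fin n → ℝ) : Finset (Fin n) :=
  Finset.univ.filter (fun i => x i ≠ 0)

lemma l1_split {n : ℕ} (S : Finset (Fin n)) (x : Fin n → ℝ) :
    l1 x = l1S S x + l1S Sᶜ x := by
  unfold l1 l1S
  exact (Finset.sum_add_sum_compl S fun i => |x i|).symm

/-- Let `T` be an abstract simplicial complex of subsets of `U_n = {0,…,n-1}` and
`Φ ∈ ℝ^{m×n}`.  Every `xbar` with `supp xbar ∈ T` is the unique solution of
`min ‖x‖₁ s.t. Φ x = Φ xbar` iff `Φ` satisfies the Generalized Nullspace Property w.r.t. `T`. -/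
theorem stmt0 {m n : ℕ} (Φ : Matrix (Fin m) (Fin n) ℝ) (T : Set (Finset (Fin n)))
    (hTne : T.Nonempty) (hASC : ∀ S ∈ T, ∀ W ⊆ S, W ∈ T) :
    (∀ xbar : Fin n → ℝ, suppF xbar ∈ T →
        ∀ x : Fin n → ℝ, Φ.mulVec x = Φ.mulVec xbar → x ≠ xbar → l1 xbar < l1 x)
      ↔ (∀ η : Fin n → ℝ, Φ.mulVec η = 0 → η ≠ 0 → ∀ S ∈ T, l1S S η < l1S Sᶜ η) := by
  constructor
  · -- uniqueness ⇒ GNUP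
    intro h η hΦη hη S hS
    set xbar : Fin n → ℝ := fun i => if i ∈ S then -η i else 0 with hxbar
    set x : Fin n → ℝ := fun i => if i ∈ S then 0 else η i with hx
    have hdiff : x - xbar = η := by
      funext i
      by_cases hi : i ∈ S <;> simp [hx, hxbar, hi]
    have hsupp : suppF xbar ∈ T := by
      apply hASC S hS
      intro i hi
      simp only [suppF, Finset.mem_filter] at hi
      by_contra hiS
      exact hi.2 (by simp [hxbar, hiS])
    have hΦeq : Φ.mulVec x = Φ.mulVec xbar := by
      have h0 : Φ.mulVec (x - xbar) = 0 := by rw [hdiff]; exact hΦη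
      rw [Matrix.mulVec_sub] at h0
      exact sub_eq_zero.mp h0
    have hne : x ≠ xbar := by
      intro he
      exact hη (by rw [← hdiff, he, sub_self])
    have hlt := h xbar hsupp x hΦeq hne
    have e1 : l1 xbar = l1S S η := by
      rw [l1_split S]
      have h1 : l1S S xbar = l1S S η := by
        apply Finset.sum_congr rfl
        intro i hi
        simp [hxbar, hi]
      have h2 : l1S Sᶜ xbar = 0 := by
        apply Finset.sum_eq_zero
        intro i hi
        simp only [Finset.mem_compl] at hi
        simp [hxbar, hi]
      rw [h1, h2, add_zero]
    have e2 : l1 x = l1S Sᶜ η := by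
      rw [l1_split S]
      have h1 : l1S S x = 0 := by
        apply Finset.sum_eq_zero
        intro i hi
        simp [hx, hi]
      have h2 : l1S Sᶜ x = l1S Sᶜ η := by
        apply Finset.sum_congr rfl
        intro i hi
        simp only [Finset.mem_compl] at hi
        simp [hx, hi]
      rw [h1, h2, zero_add]
    rw [e1, e2] at hlt
    exact hlt
  · -- GNUP ⇒ uniqueness
    intro h xbar hsupp x hΦeq hne
    set η : Fin n → ℝ := x - xbar with hη
    have hΦη : Φ.mulVec η = 0 := by
      rw [hη, Matrix.mulVec_sub, hΦeq, sub_self]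
    have hηne : η ≠ 0 := sub_ne_zero.mpr hne
    set S := suppF xbar with hSdef
    have hlt := h η hΦη hηne S hsupp
    have hxbarc : l1S Sᶜ xbar = 0 := by
      apply Finset.sum_eq_zero
      intro i hi
      simp only [Finset.mem_compl, hSdef, suppF, Finset.mem_filter, Finset.mem_univ,
        true_and, not_not] at hi
      simp [hi]
    have hxc : l1S Sᶜ x = l1S Sᶜ η := by
      apply Finset.sum_congr rfl
      intro i hi
      simp only [Finset.mem_compl, hSdef, suppF, Finset.mem_filter, Finset.mem_univ,
        true_and, not_not] at hi
      simp [hη, hi]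
    have htri : l1S S xbar ≤ l1S S x + l1S S η := by
      unfold l1S
      rw [← Finset.sum_add_distrib]
      apply Finset.sum_le_sum
      intro i _
      have : |xbar i| = |x i - (x i - xbar i)| := by ring_nf
      rw [this]
      exact abs_sub (x i) (x i - xbar i)
    have hx1 := l1_split S x
    have hx2 := l1_split S xbar
    rw [hx2, hxbarc, add_zero, hx1, hxc]
    linarith
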